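/- With X, Z defined on two qubits as X = ½(σ^x⊗1 + 1⊗σ^x − i σ^z⊗σ^y + i σ^y⊗σ^z) and Z = (1/√2)e^{iπ/4}(σ^z⊗1 − i·1⊗σ^z), one has X² = σ^x⊗σ^x and Z² = σ^z⊗σ^z. -/
import Mathlib

open Matrix Complex Kronecker

noncomputable section

def sigmaX : Matrix (Fin 2) (Fin 2) ℂ := !![0, 1; 1, 0]
def sigmaY : Matrix (Fin 2) (Fin 2) ℂ := !![0, -Complex.I; Complex.I, 0]
def sigmaZ : Matrix (Fin 2) (Fin 2) ℂ := !![1, 0; 0, -1]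

def Xop : Matrix (Fin 2 × Fin 2) (Fin 2 × Fin 2) ℂ :=
  (1 / 2 : ℂ) • (sigmaX ⊗ₖ 1 + 1 ⊗ₖ sigmaX
    - Complex.I • (sigmaZ ⊗ₖ sigmaY) + Complex.I • (sigmaY ⊗ₖ sigmaZ))

def Zop : Matrix (Fin 2 × Fin 2) (Fin 2 × Fin 2) ℂ :=
  ((1 / Real.sqrt 2 : ℝ) * Complex.exp (Real.pi * Complex.I / 4)) •
    (sigmaZ ⊗ₖ 1 - Complex.I • (1 ⊗ₖ sigmaZ))

lemma scalar_sq : (((1 / Real.sqrt 2 : ℝ) : ℂ) * Complex.exp (Real.pi * Complex.I / 4)) ^ 2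
    = Complex.I / 2 := by
  have h : Complex.exp (Real.pi * Complex.I / 4) ^ 2 = Complex.exp (Real.pi * Complex.I / 2) := by
    rw [← Complex.exp_nat_mul]; ring_nf
  have h2 : Complex.exp (Real.pi * Complex.I / 2) = Complex.I := by
    have := Complex.exp_mul_I ((Real.pi : ℂ) / 2)
    rw [show (Real.pi : ℂ) * Complex.I / 2 = (Real.pi : ℂ) / 2 * Complex.I by ring, this,
      show ((Real.pi : ℂ) / 2) = ((Real.pi / 2 : ℝ) : ℂ) by push_cast; ring,
      ← Complex.ofReal_cos, ← Complex.ofReal_sin]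
    simp [Real.cos_pi_div_two, Real.sin_pi_div_two]
  have h3 : ((1 / Real.sqrt 2 : ℝ) : ℂ) ^ 2 = 1 / 2 := by
    push_cast
    rw [div_pow, one_pow, ← Complex.ofReal_pow, Real.sq_sqrt (by norm_num : (2:ℝ) ≥ 0)]
    norm_num
  rw [mul_pow, h, h2, h3]; ring

lemma sXsX : sigmaX * sigmaX = 1 := by
  ext i j; fin_cases i <;> fin_cases j <;>
    simp [sigmaX, Matrix.mul_apply, Fin.sum_univ_two, Matrix.one_apply]
lemma sYsY : sigmaY * sigmaY = 1 := by
  ext i j; fin_cases i <;> fin_cases j <;>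
    simp [sigmaY, Matrix.mul_apply, Fin.sum_univ_two, Matrix.one_apply]
lemma sZsZ : sigmaZ * sigmaZ = 1 := by
  ext i j; fin_cases i <;> fin_cases j <;>
    simp [sigmaZ, Matrix.mul_apply, Fin.sum_univ_two, Matrix.one_apply]
lemma sXsY : sigmaX * sigmaY = Complex.I • sigmaZ := by
  ext i j; fin_cases i <;> fin_cases j <;>
    simp [sigmaX, sigmaY, sigmaZ, Matrix.mul_apply, Fin.sum_univ_two, neg_smul]
lemma sYsX : sigmaY * sigmaX = (-Complex.I) • sigmaZ := by
  ext i j; fin_cases i <;> fin_cases j <;>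
    simp [sigmaX, sigmaY, sigmaZ, Matrix.mul_apply, Fin.sum_univ_two, neg_smul]
lemma sYsZ : sigmaY * sigmaZ = Complex.I • sigmaX := by
  ext i j; fin_cases i <;> fin_cases j <;>
    simp [sigmaX, sigmaY, sigmaZ, Matrix.mul_apply, Fin.sum_univ_two, neg_smul]
lemma sZsY : sigmaZ * sigmaY = (-Complex.I) • sigmaX := by
  ext i j; fin_cases i <;> fin_cases j <;>
    simp [sigmaX, sigmaY, sigmaZ, Matrix.mul_apply, Fin.sum_univ_two, neg_smul]
lemma sZsX : sigmaZ * sigmaX = Complex.I • sigmaY := by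
  ext i j; fin_cases i <;> fin_cases j <;>
    simp [sigmaX, sigmaY, sigmaZ, Matrix.mul_apply, Fin.sum_univ_two, neg_smul]
lemma sXsZ : sigmaX * sigmaZ = (-Complex.I) • sigmaY := by
  ext i j; fin_cases i <;> fin_cases j <;>
    simp [sigmaX, sigmaY, sigmaZ, Matrix.mul_apply, Fin.sum_univ_two, neg_smul]

theorem squares_of_generalized_Paulis :
    Xop ^ 2 = sigmaX ⊗ₖ sigmaX ∧ Zop ^ 2 = sigmaZ ⊗ₖ sigmaZ := by
  constructor
  · rw [pow_two, Xop]
    rw [Matrix.smul_mul, Matrix.mul_smul, smul_smul]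
    simp only [add_mul, sub_mul, mul_add, mul_sub, Matrix.smul_mul, Matrix.mul_smul,
      ← Matrix.mul_kronecker_mul, sXsX, sYsY, sZsZ, sXsY, sYsX, sYsZ, sZsY, sZsX, sXsZ,
      one_mul, mul_one, Matrix.one_mul, Matrix.mul_one, smul_smul, Complex.I_mul_I]
    simp only [Matrix.smul_kronecker, Matrix.kronecker_smul, smul_smul, Complex.I_mul_I]
    match_scalars <;> ring_nf <;> simp [Complex.I_sq] <;> ring_nf
  · rw [pow_two, Zop, Matrix.smul_mul, Matrix.mul_smul, smul_smul, ← pow_two, scalar_sq]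
    simp only [sub_mul, mul_sub, Matrix.smul_mul, Matrix.mul_smul,
      ← Matrix.mul_kronecker_mul, sZsZ, Matrix.one_mul, Matrix.mul_one, smul_smul,
      Complex.I_mul_I, Matrix.smul_kronecker, Matrix.kronecker_smul, neg_smul, neg_neg]
    match_scalars <;> ring_nf <;> simp [Complex.I_sq] <;> ring_nf
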